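/- (Invariance of the average state) For every g : G, (A g) * ρμ * (A g)ᴴ = ρμ and (A g)ᴴ * ρμ * (A g) = ρμ. -/

import Mathlib

open MeasureTheory
open scoped Kronecker Matrix ComplexOrder

noncomputable section

namespace GroupEstimation

variable {G : Type} [Group G] [TopologicalSpace G] [IsTopologicalGroup G]
  [CompactSpace G] [T2Space G] [MeasurableSpace G] [BorelSpace G]

/-- Vectorization of a square matrix. -/
def vec {d : ℕ} (A : Matrix (Fin d) (Fin d) ℂ) : EuclideanSpace ℂ (Fin d × Fin d) :=
  WithLp.toLp 2 (fun p => A p.1 p.2)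

/-- The rank-one state `|f(g)⟩⟩⟨⟨f(g)|`. -/
def rho {d : ℕ} (f : G → Matrix (Fin d) (Fin d) ℂ) (g : G) :
    Matrix (Fin d × Fin d) (Fin d × Fin d) ℂ :=
  fun p q => f g p.1 p.2 * star (f g q.1 q.2)

/-- `A g = f g ⊗ₖ 1`. -/
def Amat {d : ℕ} (f : G → Matrix (Fin d) (Fin d) ℂ) (g : G) :
    Matrix (Fin d × Fin d) (Fin d × Fin d) ℂ :=
  f g ⊗ₖ (1 : Matrix (Fin d) (Fin d) ℂ)

/-- The average state `ρμ` (entrywise Bochner integral). -/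
def rhoMu (μ : Measure G) {d : ℕ} (f : G → Matrix (Fin d) (Fin d) ℂ) :
    Matrix (Fin d × Fin d) (Fin d × Fin d) ℂ :=
  fun p q => ∫ g, rho f g p q ∂μ

/-- positivity, vanishing at ∅ and countable additivity (the "measure part" of a GPOVM). -/
def IsPreGPOVM {d : ℕ} (M : Set G → Matrix (Fin d × Fin d) (Fin d × Fin d) ℂ) : Prop :=
  (∀ B : Set G, MeasurableSet B → (M B).PosSemidef) ∧ M ∅ = 0 ∧
    ∀ B : ℕ → Set G, (∀ j, MeasurableSet (B j)) → Pairwise (Function.onFun Disjoint B) →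
      M (⋃ j, B j) = ∑' j, M (B j)

/-- Generalized POVM. -/
def IsGPOVM (μ : Measure G) {d : ℕ} (f : G → Matrix (Fin d) (Fin d) ℂ)
    (M : Set G → Matrix (Fin d × Fin d) (Fin d × Fin d) ℂ) : Prop :=
  IsPreGPOVM M ∧ (M Set.univ * rhoMu μ f).trace = 1

/-- Covariance of a GPOVM. -/
def IsCovariant {d : ℕ} (f : G → Matrix (Fin d) (Fin d) ℂ)
    (M : Set G → Matrix (Fin d × Fin d) (Fin d × Fin d) ℂ) : Prop :=
  ∀ (g : G) (B : Set G), MeasurableSet B →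
    M ((g * ·) '' B) = Amat f g * M B * (Amat f g)ᴴ

/-- The covariant GPOVM with seed `T`. -/
def MT (μ : Measure G) {d : ℕ} (f : G → Matrix (Fin d) (Fin d) ℂ)
    (T : Matrix (Fin d × Fin d) (Fin d × Fin d) ℂ) (B : Set G) :
    Matrix (Fin d × Fin d) (Fin d × Fin d) ℂ :=
  fun p q => ∫ g in B, (Amat f g * T * (Amat f g)ᴴ) p q ∂μ

/-- Pointwise risk. -/
def Dpt {d : ℕ} (w : G → G → ℝ)
    (ν : (Set G → Matrix (Fin d × Fin d) (Fin d × Fin d) ℂ) → G → Measure G)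
    (M : Set G → Matrix (Fin d × Fin d) (Fin d × Fin d) ℂ) (g : G) : ℝ :=
  ∫ gh, w g gh ∂(ν M g)

/-- Bayes risk. -/
def Dbayes (μ : Measure G) {d : ℕ} (w : G → G → ℝ)
    (ν : (Set G → Matrix (Fin d × Fin d) (Fin d × Fin d) ℂ) → G → Measure G)
    (M : Set G → Matrix (Fin d × Fin d) (Fin d × Fin d) ℂ) : ℝ :=
  ∫ g, Dpt w ν M g ∂μ

/-- Minimax risk. -/
def Dmax {d : ℕ} (w : G → G → ℝ)
    (ν : (Set G → Matrix (Fin d × Fin d) (Fin d × Fin d) ℂ) → G → Measure G)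
    (M : Set G → Matrix (Fin d × Fin d) (Fin d × Fin d) ℂ) : ℝ :=
  ⨆ g : G, Dpt w ν M g

/-- Twisted GPOVM `M_g`. -/
def twist {d : ℕ} (f : G → Matrix (Fin d) (Fin d) ℂ)
    (M : Set G → Matrix (Fin d × Fin d) (Fin d × Fin d) ℂ) (g : G) (B : Set G) :
    Matrix (Fin d × Fin d) (Fin d × Fin d) ℂ :=
  (Amat f g)ᴴ * M ((g * ·) '' B) * Amat f g

/-- Matrix of the orthogonal projection onto span {v g}. -/
def P0 {d : ℕ} (f : G → Matrix (Fin d) (Fin d) ℂ) :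
    Matrix (Fin d × Fin d) (Fin d × Fin d) ℂ :=
  Matrix.toEuclideanLin.symm
    ((Submodule.span ℂ (Set.range fun g => vec (f g))).subtype ∘ₗ
      (Submodule.orthogonalProjectionOnto (Submodule.span ℂ (Set.range fun g => vec (f g)))).toLinearMap)

lemma rho_cont {d : ℕ} {f : G → Matrix (Fin d) (Fin d) ℂ} (hf : Continuous f)
    (p q : Fin d × Fin d) : Continuous fun h => rho f h p q := by
  have h1 : Continuous fun h : G => f h p.1 p.2 :=
    (continuous_apply p.2).comp ((continuous_apply p.1).comp hf)
  have h2 : Continuous fun h : G => f h q.1 q.2 :=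
    (continuous_apply q.2).comp ((continuous_apply q.1).comp hf)
  exact h1.mul h2.star

lemma conj_rho {d : ℕ} (f : G → Matrix (Fin d) (Fin d) ℂ)
    (c : G → G → ℂ) (hc_norm : ∀ g h : G, ‖c g h‖ = 1)
    (hc_proj : ∀ g h : G, f (g * h) = c g h • (f g * f h)) (g h : G) :
    Amat f g * rho f h * (Amat f g)ᴴ = rho f (g * h) := by
  have hc : c g h * star (c g h) = 1 := by
    have hn : Complex.normSq (c g h) = 1 := by
      rw [Complex.normSq_eq_norm_sq, hc_norm]; norm_num
    rw [Complex.star_def, Complex.mul_conj, hn]; norm_num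
  ext p q
  simp only [Matrix.mul_apply, Amat, Matrix.conjTranspose_apply, Matrix.kroneckerMap_apply,
    rho, Fintype.sum_prod_type, Matrix.one_apply, hc_proj, Matrix.smul_apply, smul_eq_mul,
    mul_ite, ite_mul, mul_zero, zero_mul, mul_one, one_mul, apply_ite (star : ℂ → ℂ),
    star_mul', star_one, star_zero, Finset.sum_ite_eq, Finset.sum_ite_eq',
    Finset.mem_univ, if_true]
  rw [show (c g h * (∑ j, f g p.1 j * f h j p.2)) *
      (star (c g h) * star (∑ j, f g q.1 j * f h j q.2)) =
      (c g h * star (c g h)) * ((∑ j, f g p.1 j * f h j p.2) *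
        star (∑ j, f g q.1 j * f h j q.2)) by ring, hc, one_mul, star_sum,
    Finset.sum_mul_sum, Finset.sum_comm]
  apply Finset.sum_congr rfl
  intro s _
  rw [Finset.sum_mul]
  apply Finset.sum_congr rfl
  intro r _
  simp only [star_mul']
  ring

lemma rhoMu_conj (μ : Measure G) [IsFiniteMeasure μ] {d : ℕ}
    (f : G → Matrix (Fin d) (Fin d) ℂ) (hf_cont : Continuous f) (g : G) :
    Amat f g * rhoMu μ f * (Amat f g)ᴴ =
      fun p q => ∫ h, (Amat f g * rho f h * (Amat f g)ᴴ) p q ∂μ := by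
  have hint : ∀ r s : Fin d × Fin d, Integrable (fun h => rho f h r s) μ := fun r s =>
    (rho_cont hf_cont r s).integrable_of_hasCompactSupport (HasCompactSupport.of_compactSpace _)
  ext p q
  simp only [Matrix.mul_apply, rhoMu, Matrix.conjTranspose_apply]
  have step1 : ∀ s : Fin d × Fin d,
      (∑ r, Amat f g p r * ∫ h, rho f h r s ∂μ) =
        ∫ h, ∑ r, Amat f g p r * rho f h r s ∂μ := by
    intro s
    rw [integral_finset_sum _ (fun r _ => (hint r s).const_mul _)]
    exact Finset.sum_congr rfl fun r _ => (integral_const_mul _ _).symm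
  calc (∑ s, (∑ r, Amat f g p r * ∫ h, rho f h r s ∂μ) * star (Amat f g q s))
      = ∑ s, ∫ h, (∑ r, Amat f g p r * rho f h r s) * star (Amat f g q s) ∂μ := by
        refine Finset.sum_congr rfl fun s _ => ?_
        rw [step1, integral_mul_const]
    _ = ∫ h, ∑ s, (∑ r, Amat f g p r * rho f h r s) * star (Amat f g q s) ∂μ := by
        rw [integral_finset_sum]
        intro s _
        exact ((integrable_finset_sum _ fun r _ => (hint r s).const_mul _).mul_const _)

lemma Amat_unitary {d : ℕ} (f : G → Matrix (Fin d) (Fin d) ℂ)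
    (hf_unitary : ∀ g : G, f g ∈ Matrix.unitaryGroup (Fin d) ℂ) (g : G) :
    (Amat f g)ᴴ * Amat f g = 1 := by
  have hAc : (Amat f g)ᴴ = (f g)ᴴ ⊗ₖ (1 : Matrix (Fin d) (Fin d) ℂ) := by
    ext p q
    simp only [Amat, Matrix.conjTranspose_apply, Matrix.kroneckerMap_apply, Matrix.one_apply,
      mul_ite, mul_one, mul_zero, apply_ite (star : ℂ → ℂ), star_zero, star_mul']
    by_cases hpq : p.2 = q.2 <;> simp [hpq, Ne.symm, eq_comm]
  have h1 : (f g)ᴴ * f g = 1 := by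
    have := (hf_unitary g).1
    rwa [Matrix.star_eq_conjTranspose] at this
  rw [hAc, Amat, ← Matrix.mul_kronecker_mul, h1, Matrix.one_mul, Matrix.one_kronecker_one]

/-- Invariance of the average state under the action `A g`. -/
theorem rhoMu_invariant
    {G : Type} [Group G] [TopologicalSpace G] [IsTopologicalGroup G]
    [CompactSpace G] [T2Space G] [MeasurableSpace G] [BorelSpace G]
    (μ : Measure G) [μ.IsHaarMeasure] [IsProbabilityMeasure μ]
    {d : ℕ} (hd : 0 < d) (f : G → Matrix (Fin d) (Fin d) ℂ)
    (hf_cont : Continuous f) (hf_one : f 1 = 1)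
    (hf_unitary : ∀ g : G, f g ∈ Matrix.unitaryGroup (Fin d) ℂ)
    (c : G → G → ℂ) (hc_norm : ∀ g h : G, ‖c g h‖ = 1)
    (hc_proj : ∀ g h : G, f (g * h) = c g h • (f g * f h))
    (g : G) :
    Amat f g * rhoMu μ f * (Amat f g)ᴴ = rhoMu μ f ∧
    (Amat f g)ᴴ * rhoMu μ f * Amat f g = rhoMu μ f := by
  have h1 : Amat f g * rhoMu μ f * (Amat f g)ᴴ = rhoMu μ f := by
    rw [rhoMu_conj μ f hf_cont g]
    ext p q
    show (∫ h, (Amat f g * rho f h * (Amat f g)ᴴ) p q ∂μ) = rhoMu μ f p q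
    simp_rw [conj_rho f c hc_norm hc_proj g]
    exact integral_mul_left_eq_self (fun h => rho f h p q) g
  refine ⟨h1, ?_⟩
  have hu := Amat_unitary f hf_unitary g
  calc (Amat f g)ᴴ * rhoMu μ f * Amat f g
      = (Amat f g)ᴴ * (Amat f g * rhoMu μ f * (Amat f g)ᴴ) * Amat f g := by rw [h1]
    _ = ((Amat f g)ᴴ * Amat f g) * rhoMu μ f * ((Amat f g)ᴴ * Amat f g) := by
        simp only [Matrix.mul_assoc]
    _ = rhoMu μ f := by rw [hu, Matrix.one_mul, Matrix.mul_one]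

end GroupEstimation
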